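/- Let (G, α) be a finite edge-labeled graph, G' a subgraph of G, and p a generalized spline on (G', α|_{G'}). For each edge v_i v_j of G not in G', choose a nonzero element α_{i,j} ∈ α(v_i v_j) and let N be the product of all these elements. Then the tuple q defined by q_{v_i} = N·p_{v_i} if v_i ∈ V(G') and q_{v_i} = 0 otherwise is a generalized spline on (G, α). -/

import Mathlib

/-- A generalized spline on the edge-labeled graph `(G, α)`. -/
def IsSpline {V R : Type*} [CommRing R] (G : SimpleGraph V) (α : Sym2 V → Ideal R)
    (p : V → R) : Prop :=
  ∀ u v : V, G.Adj u v → p u - p v ∈ α s(u, v)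

/-- Extending a spline on a subgraph to the whole graph: let `H` be a subgraph of `G`, `p`
a generalized spline on `(H, α|_H)`, and for each edge of `G` not in `H` (collected in the
finite set `S`) choose a nonzero element `c e ∈ α e`.  With `N = ∏_{e ∈ S} c e`, the tuple
equal to `N · p` on the vertices of `H` and `0` elsewhere is a generalized spline on
`(G, α)`. -/
theorem spline_extend_from_subgraph {V R : Type*} [Fintype V] [CommRing R]
    (G : SimpleGraph V) (α : Sym2 V → Ideal R) (H : G.Subgraph)
    [DecidablePred (· ∈ H.verts)]
    (p : V → R) (hp : ∀ u v : V, H.Adj u v → p u - p v ∈ α s(u, v))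
    (S : Finset (Sym2 V)) (hS : ∀ e, e ∈ S ↔ e ∈ G.edgeSet ∧ e ∉ H.edgeSet)
    (c : Sym2 V → R) (hc : ∀ e ∈ S, c e ∈ α e ∧ c e ≠ 0) :
    IsSpline G α (fun w => if w ∈ H.verts then (∏ e ∈ S, c e) * p w else 0) := by
  intro u v huv
  by_cases hH : H.Adj u v
  · have hu : u ∈ H.verts := hH.fst_mem
    have hv : v ∈ H.verts := hH.snd_mem
    simp only [hu, hv, if_pos]
    rw [← mul_sub]
    exact Ideal.mul_mem_left _ _ (hp u v hH)
  · have hmem : s(u, v) ∈ S := by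
      rw [hS]
      exact ⟨huv, fun h => hH (SimpleGraph.Subgraph.mem_edgeSet.mp h)⟩
    have hN : (∏ e ∈ S, c e) ∈ α s(u, v) := by
      classical
      rw [← Finset.prod_erase_mul _ _ hmem]
      exact Ideal.mul_mem_left _ _ (hc _ hmem).1
    have h1 : (if u ∈ H.verts then (∏ e ∈ S, c e) * p u else 0) ∈ α s(u, v) := by
      split
      · exact Ideal.mul_mem_right _ _ hN
      · exact Ideal.zero_mem _
    have h2 : (if v ∈ H.verts then (∏ e ∈ S, c e) * p v else 0) ∈ α s(u, v) := by
      split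
      · exact Ideal.mul_mem_right _ _ hN
      · exact Ideal.zero_mem _
    exact Ideal.sub_mem _ h1 h2
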